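/- arXiv:1402.4861 — 2 statements merged into one kernel-verified Lean document; each statement's English description precedes it below -/
import Mathlib

section
/- Let B be a symmetric positive definite n×n real matrix, let v, r ∈ ℝⁿ, and let δ > 0 be such that the corrected gradient variation r̃ := r − δv satisfies vᵀr̃ > 0. Then the matrix B₊ − δI, where B₊ := B + (r̃ r̃ᵀ)/(vᵀ r̃) − (B v vᵀ B)/(vᵀ B v) + δI is the regularized BFGS update, is symmetric positive definite; in particular all eigenvalues of B₊ are strictly larger than δ. -/
open Matrix

lemma vecMulVec_mulVec' {n : ℕ} (a b x : Fin n → ℝ) : (vecMulVec a b) *ᵥ x = (b ⬝ᵥ x) • a := by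
  ext i; simp [mulVec, vecMulVec_apply, dotProduct, Finset.mul_sum, mul_comm, mul_left_comm]

/-- **Eigenvalue lower bound for the regularized BFGS update.**
For a symmetric positive definite matrix `B`, vectors `v, r`, and `δ > 0` with
`vᵀ(r - δv) > 0`, the regularized BFGS update
`B₊ = B + (r̃r̃ᵀ)/(vᵀr̃) - (Bvvᵀ B)/(vᵀBv) + δI` (where `r̃ = r - δv`)
is such that `B₊ - δI` is (symmetric) positive definite, i.e. all eigenvalues
of `B₊` are strictly larger than `δ`. -/
theorem regularized_bfgs_update_posdef {n : ℕ}
    (B : Matrix (Fin n) (Fin n) ℝ) (hB : B.PosDef)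
    (v r : Fin n → ℝ) (δ : ℝ) (hδ : 0 < δ)
    (hcurv : 0 < v ⬝ᵥ (r - δ • v)) :
    ((B + (v ⬝ᵥ (r - δ • v))⁻¹ • vecMulVec (r - δ • v) (r - δ • v)
        - (v ⬝ᵥ B *ᵥ v)⁻¹ • vecMulVec (B *ᵥ v) (B *ᵥ v)
        + δ • (1 : Matrix (Fin n) (Fin n) ℝ))
      - δ • (1 : Matrix (Fin n) (Fin n) ℝ)).PosDef := by
  rw [add_sub_cancel_right]
  set r' := r - δ • v with hr'
  have hv : v ≠ 0 := by rintro rfl; simp at hcurv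
  have hc : 0 < v ⬝ᵥ B *ᵥ v := by have := hB.dotProduct_mulVec_pos hv; rwa [star_trivial] at this
  set s := v ⬝ᵥ r' with hs
  set c := v ⬝ᵥ B *ᵥ v with hcdef
  have hBsym : Bᵀ = B := hB.1
  have hBij : ∀ i j, B j i = B i j := fun i j => by
    have := congrFun (congrFun hBsym j) i
    simpa [transpose_apply] using this.symm
  have hsym : ∀ y : Fin n → ℝ, v ⬝ᵥ B *ᵥ y = y ⬝ᵥ B *ᵥ v := by
    intro y
    rw [dotProduct_mulVec, ← mulVec_transpose, hBsym, dotProduct_comm]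
  refine posDef_iff_dotProduct_mulVec.mpr ⟨?_, ?_⟩
  · ext i j
    simp only [conjTranspose_apply, Matrix.add_apply, Matrix.sub_apply, Matrix.smul_apply,
      vecMulVec_apply, star_trivial, smul_eq_mul]
    rw [hBij i j]; ring
  · intro x hx
    have hstar : (star x : Fin n → ℝ) = x := by simp
    rw [hstar, sub_mulVec, add_mulVec, smul_mulVec, smul_mulVec,
      vecMulVec_mulVec', vecMulVec_mulVec']
    simp only [dotProduct_sub, dotProduct_add, dotProduct_smul, smul_eq_mul]
    set a := x ⬝ᵥ B *ᵥ x with ha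
    set b := x ⬝ᵥ B *ᵥ v with hb
    set p := r' ⬝ᵥ x with hp
    have hrx : x ⬝ᵥ r' = p := dotProduct_comm x r'
    have hvx : B *ᵥ v ⬝ᵥ x = b := by rw [dotProduct_comm]
    rw [hrx, hvx]
    set w : Fin n → ℝ := x - (b / c) • v with hw
    have hwq : w ⬝ᵥ B *ᵥ w = a - b ^ 2 / c := by
      rw [hw, sub_dotProduct, mulVec_sub, dotProduct_sub, dotProduct_sub, mulVec_smul]
      simp only [smul_dotProduct, dotProduct_smul, smul_eq_mul]
      rw [hsym x]
      field_simp
      ring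
    rcases eq_or_ne w 0 with hw0 | hw0
    · have hxeq : x = (b / c) • v := sub_eq_zero.mp hw0
      have hbc : b / c ≠ 0 := by
        rintro h; exact hx (by rw [hxeq, h, zero_smul])
      have hpq : p = (b / c) * s := by
        rw [hp, hxeq, dotProduct_smul, smul_eq_mul, hs, dotProduct_comm]
      have haq : a - c⁻¹ * (b * b) = 0 := by
        have h0 : w ⬝ᵥ B *ᵥ w = 0 := by rw [hw0]; simp
        rw [hwq] at h0
        have : a = b ^ 2 / c := by linarith
        rw [this]; field_simp; ring
      have hp0 : p ≠ 0 := by rw [hpq]; exact mul_ne_zero hbc (ne_of_gt hcurv)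
      have hppos : 0 < s⁻¹ * (p * p) := mul_pos (inv_pos.mpr hcurv) (mul_self_pos.mpr hp0)
      linarith
    · have hq : 0 < a - b ^ 2 / c := by have := hB.dotProduct_mulVec_pos hw0; rwa [star_trivial, hwq] at this
      have h2 : 0 ≤ s⁻¹ * (p * p) := mul_nonneg (inv_nonneg.mpr hcurv.le) (mul_self_nonneg p)
      have h3 : c⁻¹ * (b * b) = b ^ 2 / c := by ring
      linarith
end

section
/- Fix functions f̂_t : ℝⁿ → ℝ for t = 0, 1, 2, …, each twice continuously differentiable with ∇²f̂_t(w) ⪰ m·I for all w, where m > 0, and let 0 < δ < m. Let (w_t) be any sequence in ℝⁿ and let (B_t) be defined recursively by: B₀ symmetric with B₀ − δI positive definite, and for each t, setting v_t := w_{t+1} − w_t and r̃_t := ∇f̂_t(w_{t+1}) − ∇f̂_t(w_t) − δ v_t, B_{t+1} := B_t + (r̃_t r̃_tᵀ)/(v_tᵀ r̃_t) − (B_t v_t v_tᵀ B_t)/(v_tᵀ B_t v_t) + δI whenever v_t ≠ 0, and B_{t+1} := B_t when v_t = 0. Then for every t, the matrix B_t − δI is positive definite and, whenever v_t ≠ 0,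 the denominators satisfy v_tᵀ r̃_t > 0 and v_tᵀ B_t v_t > 0, so the recursion is well defined. -/
open Matrix

section Auxiliary

lemma bfgs_dot_eq_inner {n : ℕ} (a b : EuclideanSpace ℝ (Fin n)) :
    (a ⬝ᵥ (b : Fin n → ℝ)) = inner ℝ a b := by
  simp [dotProduct, PiLp.inner_apply, RCLike.inner_apply, mul_comm]

lemma bfgs_dot_vecMulVec {n : ℕ} (x a b y : Fin n → ℝ) :
    x ⬝ᵥ (vecMulVec a b *ᵥ y) = (x ⬝ᵥ a) * (b ⬝ᵥ y) := by
  simp [dotProduct, vecMulVec_apply, mulVec, Finset.mul_sum, Finset.sum_mul]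
  rw [Finset.sum_comm]
  congr 1; ext i; congr 1; ext j; ring

lemma bfgs_dot_mulVec_symm {n : ℕ} {M : Matrix (Fin n) (Fin n) ℝ} (h : Mᵀ = M)
    (x y : Fin n → ℝ) : x ⬝ᵥ M *ᵥ y = y ⬝ᵥ M *ᵥ x := by
  rw [dotProduct_mulVec, ← mulVec_transpose, h, dotProduct_comm]

lemma bfgs_isHermitian_of_symm {n : ℕ} {M : Matrix (Fin n) (Fin n) ℝ} (h : Mᵀ = M) :
    M.IsHermitian := by
  rw [Matrix.IsHermitian, conjTranspose_eq_transpose_of_trivial]; exact h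

lemma bfgs_dot_self_nonneg {n : ℕ} (x : Fin n → ℝ) : (0:ℝ) ≤ x ⬝ᵥ x :=
  Finset.sum_nonneg fun _ _ => mul_self_nonneg _

lemma bfgs_posDef_of_shift {n : ℕ} {M : Matrix (Fin n) (Fin n) ℝ} {δ : ℝ} (hδ : 0 < δ)
    (h : (M - δ • (1 : Matrix (Fin n) (Fin n) ℝ)).PosDef) : M.PosDef := by
  rw [posDef_iff_dotProduct_mulVec]
  constructor
  · have h1 := h.1
    have h2 : (δ • (1 : Matrix (Fin n) (Fin n) ℝ)).IsHermitian := by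
      apply bfgs_isHermitian_of_symm; simp
    simpa using h1.add h2
  · intro x hx
    have h1 := h.dotProduct_mulVec_pos hx
    have h2 := bfgs_dot_self_nonneg x
    simp only [sub_mulVec, dotProduct_sub, smul_mulVec, one_mulVec,
      dotProduct_smul, star_trivial, smul_eq_mul] at h1 ⊢
    nlinarith

lemma bfgs_vecMulVec_self_transpose {n : ℕ} (a : Fin n → ℝ) :
    (vecMulVec a a)ᵀ = vecMulVec a a := by
  ext i j; simp [vecMulVec_apply, transpose_apply, mul_comm]

lemma bfgs_quad_expand {n : ℕ} {Bt : Matrix (Fin n) (Fin n) ℝ} (hsymm : Btᵀ = Bt)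
    (x v : Fin n → ℝ) (t : ℝ) :
    (x - t • v) ⬝ᵥ Bt *ᵥ (x - t • v)
      = x ⬝ᵥ Bt *ᵥ x - 2 * t * (x ⬝ᵥ Bt *ᵥ v) + t ^ 2 * (v ⬝ᵥ Bt *ᵥ v) := by
  have hs := bfgs_dot_mulVec_symm hsymm v x
  simp only [sub_dotProduct, mulVec_sub, dotProduct_sub, smul_dotProduct,
    mulVec_smul, dotProduct_smul, smul_eq_mul]
  rw [hs]; ring

lemma bfgs_step {n : ℕ}
    {Bt : Matrix (Fin n) (Fin n) ℝ} (hsymm : Btᵀ = Bt)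
    (hBpd : Bt.PosDef)
    {v r : Fin n → ℝ} (hv : v ≠ 0) (hvr : 0 < v ⬝ᵥ r) :
    (Bt + (v ⬝ᵥ r)⁻¹ • vecMulVec r r
       - (v ⬝ᵥ Bt *ᵥ v)⁻¹ • vecMulVec (Bt *ᵥ v) (Bt *ᵥ v)).PosDef := by
  set q := v ⬝ᵥ Bt *ᵥ v with hqdef
  have hq : 0 < q := by
    have := hBpd.dotProduct_mulVec_pos hv
    simpa [star_trivial] using this
  rw [posDef_iff_dotProduct_mulVec]
  constructor
  · apply bfgs_isHermitian_of_symm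
    simp only [transpose_add, transpose_sub, transpose_smul, hsymm,
      bfgs_vecMulVec_self_transpose]
  · intro x hx
    rw [star_trivial]
    have hquad : x ⬝ᵥ (Bt + (v ⬝ᵥ r)⁻¹ • vecMulVec r r
        - q⁻¹ • vecMulVec (Bt *ᵥ v) (Bt *ᵥ v)) *ᵥ x
        = x ⬝ᵥ Bt *ᵥ x + (v ⬝ᵥ r)⁻¹ * ((x ⬝ᵥ r) * (r ⬝ᵥ x))
          - q⁻¹ * ((x ⬝ᵥ (Bt *ᵥ v)) * ((Bt *ᵥ v) ⬝ᵥ x)) := by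
      simp only [add_mulVec, sub_mulVec, smul_mulVec, dotProduct_add,
        dotProduct_sub, dotProduct_smul, smul_eq_mul, bfgs_dot_vecMulVec]
    rw [hquad]
    set c := x ⬝ᵥ Bt *ᵥ v with hcdef
    have hbvx : (Bt *ᵥ v) ⬝ᵥ x = c := by rw [dotProduct_comm]
    have hrx : r ⬝ᵥ x = x ⬝ᵥ r := dotProduct_comm _ _
    rw [hbvx, hrx]
    by_cases hcase : x = (c / q) • v
    · have ht : c / q ≠ 0 := by
        intro h0
        exact hx (by rw [hcase, h0, zero_smul])
      have h1 : x ⬝ᵥ Bt *ᵥ x = (c/q)^2 * q := by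
        rw [hcase]
        simp only [smul_dotProduct, mulVec_smul, dotProduct_smul, smul_eq_mul, ← hqdef]
        ring
      have h2 : x ⬝ᵥ r = (c/q) * (v ⬝ᵥ r) := by
        rw [hcase]; simp [smul_dotProduct]
      rw [h1, h2]
      have hterm : (c/q)^2 * q + (v ⬝ᵥ r)⁻¹ * ((c/q) * (v ⬝ᵥ r) * ((c/q) * (v ⬝ᵥ r)))
          - q⁻¹ * (c * c) = (c/q)^2 * (v ⬝ᵥ r) + ((c/q)^2 * q - q⁻¹ * c^2) := by
        field_simp
        ring
      rw [hterm]
      have hz : (c/q)^2 * q - q⁻¹ * c^2 = 0 := by field_simp; ring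
      rw [hz, add_zero]
      have hp : (0:ℝ) < (c/q)^2 := by positivity
      exact mul_pos hp hvr
    · have hy : x - (c/q) • v ≠ 0 := sub_ne_zero.mpr hcase
      have hypos : 0 < (x - (c/q) • v) ⬝ᵥ Bt *ᵥ (x - (c/q) • v) := by
        have := hBpd.dotProduct_mulVec_pos hy
        simpa [star_trivial] using this
      rw [bfgs_quad_expand hsymm] at hypos
      have hz : x ⬝ᵥ Bt *ᵥ x - q⁻¹ * (c * c)
          = x ⬝ᵥ Bt *ᵥ x - 2 * (c/q) * c + (c/q)^2 * q := by
        field_simp; ring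
      have hnn : 0 ≤ (v ⬝ᵥ r)⁻¹ * (x ⬝ᵥ r * (x ⬝ᵥ r)) :=
        mul_nonneg (inv_nonneg.mpr hvr.le) (mul_self_nonneg _)
      rw [← hcdef] at hypos
      nlinarith [hypos, hnn, hz]

lemma bfgs_grad_strong_mono {n : ℕ} (f : EuclideanSpace ℝ (Fin n) → ℝ) (hf : ContDiff ℝ 2 f)
    (m : ℝ)
    (hHess : ∀ (w u : EuclideanSpace ℝ (Fin n)), m * ‖u‖^2 ≤ iteratedFDeriv ℝ 2 f w ![u, u])
    (a b : EuclideanSpace ℝ (Fin n)) :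
    m * ‖b - a‖^2 ≤ inner ℝ (b - a) (gradient f b - gradient f a) := by
  set v := b - a with hv
  have hf' : ContDiff ℝ 1 (fderiv ℝ f) := (hf.fderiv_right (le_refl _))
  set F : ℝ → ℝ := fun s => fderiv ℝ f (a + s • v) v with hF
  have hFderiv : ∀ s : ℝ, HasDerivAt F (fderiv ℝ (fderiv ℝ f) (a + s • v) v v) s := by
    intro s
    have hγ : HasDerivAt (fun s : ℝ => a + s • v) v s := by
      simpa using ((hasDerivAt_id s).smul_const v).const_add a
    have h1 : HasDerivAt (fun s : ℝ => fderiv ℝ f (a + s • v))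
        (fderiv ℝ (fderiv ℝ f) (a + s • v) v) s :=
      (hf'.differentiable one_ne_zero (a + s • v)).hasFDerivAt.comp_hasDerivAt s hγ
    simpa using h1.clm_apply (hasDerivAt_const s v)
  have hmono : Monotone (fun s => F s - s * (m * ‖v‖^2)) := by
    have hd : ∀ s : ℝ, HasDerivAt (fun s => F s - s * (m * ‖v‖^2))
        (fderiv ℝ (fderiv ℝ f) (a + s • v) v v - m * ‖v‖^2) s := by
      intro s
      have h := (hFderiv s).sub ((hasDerivAt_id s).mul_const (m * ‖v‖^2))
      simp only [id_eq, one_mul] at h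
      exact h
    apply monotone_of_deriv_nonneg
    · exact fun s => (hd s).differentiableAt
    · intro s
      rw [(hd s).deriv]
      have := hHess (a + s • v) v
      rw [iteratedFDeriv_two_apply] at this
      simp only [Matrix.cons_val_zero, Matrix.cons_val_one, Matrix.head_cons] at this
      linarith
  have hb : a + (1 : ℝ) • v = b := by rw [one_smul, hv]; abel
  have hFa : F 0 = fderiv ℝ f a v := by simp [hF]
  have hFb : F 1 = fderiv ℝ f b v := by rw [hF]; simp only [hb]
  have hg : ∀ x : EuclideanSpace ℝ (Fin n), inner ℝ (gradient f x) v = fderiv ℝ f x v := by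
    intro x
    rw [gradient]
    exact InnerProductSpace.toDual_symm_apply
  have key : F 1 - F 0 = inner ℝ v (gradient f b - gradient f a) := by
    rw [real_inner_comm, inner_sub_left, hg, hg, hFa, hFb]
  have hm' : m * ‖v‖^2 ≤ F 1 - F 0 := by
    have := hmono zero_le_one
    simp only [zero_mul, sub_zero, one_mul] at this
    linarith
  linarith [key ▸ hm']

end Auxiliary

/-- **Well-posedness of the regularized BFGS recursion (Lemmas 1 and 2 combined).**
If the sampled instantaneous functions `f̂_t` are twice continuously differentiable
with Hessians bounded below by `m·I` and `0 < δ < m`, then along the regularized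
BFGS matrix recursion (started from a symmetric `B₀` with `B₀ - δI ≻ 0`) every
`B_t - δI` is positive definite and the denominators `v_tᵀr̃_t` and `v_tᵀB_t v_t`
are strictly positive whenever `v_t ≠ 0`, so the recursion is well defined. -/
theorem regularized_bfgs_recursion_well_defined {n : ℕ}
    (f : ℕ → EuclideanSpace ℝ (Fin n) → ℝ)
    (hf : ∀ t, ContDiff ℝ 2 (f t))
    (m : ℝ) (hm : 0 < m)
    (hHess : ∀ t (w u : EuclideanSpace ℝ (Fin n)),
      m * ‖u‖ ^ 2 ≤ iteratedFDeriv ℝ 2 (f t) w ![u, u])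
    (δ : ℝ) (hδ0 : 0 < δ) (hδm : δ < m)
    (w : ℕ → EuclideanSpace ℝ (Fin n))
    (B : ℕ → Matrix (Fin n) (Fin n) ℝ)
    (hB0symm : (B 0).IsSymm)
    (hB0 : (B 0 - δ • (1 : Matrix (Fin n) (Fin n) ℝ)).PosDef)
    (hrec : ∀ t,
      (w (t + 1) - w t = 0 → B (t + 1) = B t) ∧
      (w (t + 1) - w t ≠ 0 →
        B (t + 1) =
          B t
          + ((w (t + 1) - w t) ⬝ᵥ
              (gradient (f t) (w (t + 1)) - gradient (f t) (w t)
                - δ • (w (t + 1) - w t)))⁻¹ •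
            vecMulVec
              (gradient (f t) (w (t + 1)) - gradient (f t) (w t)
                - δ • (w (t + 1) - w t))
              (gradient (f t) (w (t + 1)) - gradient (f t) (w t)
                - δ • (w (t + 1) - w t))
          - ((w (t + 1) - w t) ⬝ᵥ B t *ᵥ (w (t + 1) - w t))⁻¹ •
            vecMulVec (B t *ᵥ (w (t + 1) - w t)) (B t *ᵥ (w (t + 1) - w t))
          + δ • (1 : Matrix (Fin n) (Fin n) ℝ))) :
    ∀ t, (B t - δ • (1 : Matrix (Fin n) (Fin n) ℝ)).PosDef ∧
      (w (t + 1) - w t ≠ 0 →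
        0 < (w (t + 1) - w t) ⬝ᵥ
            (gradient (f t) (w (t + 1)) - gradient (f t) (w t)
              - δ • (w (t + 1) - w t)) ∧
        0 < (w (t + 1) - w t) ⬝ᵥ B t *ᵥ (w (t + 1) - w t)) := by
  -- the curvature condition holds at every step, independently of `B`
  have hvr : ∀ t, w (t + 1) - w t ≠ 0 →
      0 < (w (t + 1) - w t) ⬝ᵥ
        (gradient (f t) (w (t + 1)) - gradient (f t) (w t) - δ • (w (t + 1) - w t)) := by
    intro t hvz
    set v := w (t + 1) - w t with hvdef
    have h1 : (v ⬝ᵥ ((gradient (f t) (w (t + 1)) - gradient (f t) (w t)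
        - δ • v : EuclideanSpace ℝ (Fin n)) : Fin n → ℝ))
        = inner ℝ v (gradient (f t) (w (t + 1)) - gradient (f t) (w t) - δ • v) :=
      bfgs_dot_eq_inner _ _
    have h1' : v.ofLp ⬝ᵥ ((gradient (f t) (w (t + 1))).ofLp - (gradient (f t) (w t)).ofLp
        - δ • ((w (t + 1)).ofLp - (w t).ofLp))
        = inner ℝ v (gradient (f t) (w (t + 1)) - gradient (f t) (w t) - δ • v) := by
      rw [← h1, hvdef]; simp
    rw [h1', inner_sub_right, real_inner_smul_right, real_inner_self_eq_norm_sq]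
    have h2 := bfgs_grad_strong_mono (f t) (hf t) m (hHess t) (w t) (w (t + 1))
    rw [← hvdef] at h2
    have hvnorm : 0 < ‖v‖ := norm_pos_iff.mpr hvz
    nlinarith [mul_pos (sub_pos.mpr hδm) (pow_pos hvnorm 2)]
  -- inductive invariant: symmetry and positive definiteness
  have inv : ∀ t, (B t)ᵀ = B t ∧ (B t - δ • (1 : Matrix (Fin n) (Fin n) ℝ)).PosDef := by
    intro t
    induction t with
    | zero => exact ⟨hB0symm, hB0⟩
    | succ t ih =>
      by_cases hvz : w (t + 1) - w t = 0
      · rw [(hrec t).1 hvz]; exact ih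
      · rw [(hrec t).2 hvz]
        have hBpd : (B t).PosDef := bfgs_posDef_of_shift hδ0 ih.2
        have hstep := bfgs_step ih.1 hBpd (by rwa [← WithLp.ofLp_sub (p := 2), ne_eq, WithLp.ofLp_eq_zero]) (hvr t hvz)
        constructor
        · simp only [transpose_add, transpose_sub, transpose_smul, transpose_one, ih.1,
            bfgs_vecMulVec_self_transpose]
        · rw [add_sub_cancel_right]
          exact hstep
  intro t
  refine ⟨(inv t).2, fun hvz => ⟨hvr t hvz, ?_⟩⟩
  have := (bfgs_posDef_of_shift hδ0 (inv t).2).dotProduct_mulVec_pos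
    (x := (w (t + 1) - w t).ofLp) (by rwa [ne_eq, WithLp.ofLp_eq_zero])
  simpa [star_trivial] using this
end
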